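/- Let P, G, Q, A, B, C, D, R be real matrices of compatible sizes with P = Q + AᵀPA + CᵀPC − HᵀW†H, where W = R + BᵀPB + DᵀPD and H = BᵀPA + DᵀPC, and suppose W ⪰ 0 and W W† H = H. Then for all x ∈ ℝ^n and u ∈ ℝ^m: xᵀQx + uᵀRu + (Ax + Bu)ᵀP(Ax + Bu) + (Cx + Du)ᵀP(Cx + Du) − xᵀPx = (u + W†Hx)ᵀ W (u + W†Hx) ≥ 0. -/

import Mathlib

open Matrix

/-- Moore–Penrose conditions: `Wd` is the Moore–Penrose inverse of `W`. -/
def IsMoorePenrose {n m : ℕ} (W : Matrix (Fin n) (Fin m) ℝ)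
    (Wd : Matrix (Fin m) (Fin n) ℝ) : Prop :=
  W * Wd * W = W ∧ Wd * W * Wd = Wd ∧ (W * Wd)ᵀ = W * Wd ∧ (Wd * W)ᵀ = Wd * W

theorem riccati_one_step_completion {n m : ℕ}
    (P Q A C : Matrix (Fin n) (Fin n) ℝ) (R : Matrix (Fin m) (Fin m) ℝ)
    (B D : Matrix (Fin n) (Fin m) ℝ)
    (hQ : Q.IsSymm) (hP : P.IsSymm) (hR : R.IsSymm)
    (W : Matrix (Fin m) (Fin m) ℝ) (hWdef : W = R + Bᵀ * P * B + Dᵀ * P * D)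
    (H : Matrix (Fin m) (Fin n) ℝ) (hHdef : H = Bᵀ * P * A + Dᵀ * P * C)
    (Wd : Matrix (Fin m) (Fin m) ℝ) (hMP : IsMoorePenrose W Wd)
    (hRic : P = Q + Aᵀ * P * A + Cᵀ * P * C - Hᵀ * Wd * H)
    (hWpsd : W.PosSemidef) (hWH : W * Wd * H = H) :
    ∀ (x : Fin n → ℝ) (u : Fin m → ℝ),
      x ⬝ᵥ Q.mulVec x + u ⬝ᵥ R.mulVec u
        + (A.mulVec x + B.mulVec u) ⬝ᵥ P.mulVec (A.mulVec x + B.mulVec u)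
        + (C.mulVec x + D.mulVec u) ⬝ᵥ P.mulVec (C.mulVec x + D.mulVec u)
        - x ⬝ᵥ P.mulVec x
        = (u + Wd.mulVec (H.mulVec x)) ⬝ᵥ W.mulVec (u + Wd.mulVec (H.mulVec x))
      ∧ 0 ≤ (u + Wd.mulVec (H.mulVec x)) ⬝ᵥ W.mulVec (u + Wd.mulVec (H.mulVec x)) := by

  have hWs : Wᵀ = W := by
    rw [hWdef]
    simp [Matrix.transpose_add, Matrix.transpose_mul, hP.eq, hR.eq, Matrix.mul_assoc]
  intro x u
  set y := H.mulVec x with hy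
  have hWy : W.mulVec (Wd.mulVec y) = y := by
    rw [hy, Matrix.mulVec_mulVec, Matrix.mulVec_mulVec, hWH]
  -- transpose-dot helper
  have hT : ∀ {a b : ℕ} (M : Matrix (Fin a) (Fin b) ℝ) (v : Fin b → ℝ) (w : Fin a → ℝ),
      v ⬝ᵥ Mᵀ.mulVec w = M.mulVec v ⬝ᵥ w := by
    intro a b M v w
    rw [Matrix.dotProduct_mulVec, Matrix.vecMul_transpose]
  have hWsym : ∀ (v w : Fin m → ℝ), v ⬝ᵥ W.mulVec w = W.mulVec v ⬝ᵥ w := by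
    intro v w; rw [← hT, hWs]
  have hPsym : ∀ (v w : Fin n → ℝ), v ⬝ᵥ P.mulVec w = P.mulVec v ⬝ᵥ w := by
    intro v w; rw [← hT, hP.eq]
  -- RHS computation
  have hR1 : (u + Wd.mulVec y) ⬝ᵥ W.mulVec (u + Wd.mulVec y)
      = u ⬝ᵥ W.mulVec u + u ⬝ᵥ y + y ⬝ᵥ u + Wd.mulVec y ⬝ᵥ y := by
    rw [Matrix.mulVec_add, dotProduct_add, add_dotProduct,
      add_dotProduct, hWy]
    have h1 : Wd.mulVec y ⬝ᵥ W.mulVec u = y ⬝ᵥ u := by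
      rw [hWsym, hWy]
    rw [h1]; ring
  -- expand quadratic in P
  have hquad : ∀ (E F : Matrix (Fin n) (Fin n) ℝ) (G K : Matrix (Fin n) (Fin m) ℝ),
      (E.mulVec x + G.mulVec u) ⬝ᵥ P.mulVec (E.mulVec x + G.mulVec u)
      = x ⬝ᵥ (Eᵀ * P * E).mulVec x + 2 * (u ⬝ᵥ (Gᵀ * P * E).mulVec x)
        + u ⬝ᵥ (Gᵀ * P * G).mulVec u := by
    intro E F G K
    have e : ∀ {a b : ℕ} (M : Matrix (Fin n) (Fin a) ℝ) (N : Matrix (Fin n) (Fin b) ℝ)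
        (v : Fin a → ℝ) (w : Fin b → ℝ),
        v ⬝ᵥ (Mᵀ * P * N).mulVec w = M.mulVec v ⬝ᵥ P.mulVec (N.mulVec w) := by
      intro a b M N v w
      rw [Matrix.mul_assoc, ← Matrix.mulVec_mulVec, hT, ← Matrix.mulVec_mulVec]
    rw [e, e, e]
    rw [Matrix.mulVec_add, dotProduct_add, add_dotProduct,
      add_dotProduct]
    have : E.mulVec x ⬝ᵥ P.mulVec (G.mulVec u) = G.mulVec u ⬝ᵥ P.mulVec (E.mulVec x) := by
      rw [hPsym, dotProduct_comm]
    rw [this]; ring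
  have hrw1 := hquad A A B B
  have hrw2 := hquad C C D D
  -- Riccati substitution for x ⬝ P x
  have hPx : x ⬝ᵥ P.mulVec x
      = x ⬝ᵥ Q.mulVec x + x ⬝ᵥ (Aᵀ * P * A).mulVec x + x ⬝ᵥ (Cᵀ * P * C).mulVec x
        - x ⬝ᵥ (Hᵀ * Wd * H).mulVec x := by
    conv_lhs => rw [hRic]
    simp [Matrix.add_mulVec, Matrix.sub_mulVec, dotProduct_add, dotProduct_sub]
  have hHterm : x ⬝ᵥ (Hᵀ * Wd * H).mulVec x = Wd.mulVec y ⬝ᵥ y := by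
    rw [Matrix.mul_assoc, ← Matrix.mulVec_mulVec, hT, ← Matrix.mulVec_mulVec, ← hy,
      dotProduct_comm]
  have hcross : u ⬝ᵥ (Bᵀ * P * A).mulVec x + u ⬝ᵥ (Dᵀ * P * C).mulVec x = u ⬝ᵥ y := by
    rw [hy, hHdef, Matrix.add_mulVec, dotProduct_add]
  have hWterm : u ⬝ᵥ R.mulVec u + u ⬝ᵥ (Bᵀ * P * B).mulVec u + u ⬝ᵥ (Dᵀ * P * D).mulVec u
      = u ⬝ᵥ W.mulVec u := by
    rw [hWdef, Matrix.add_mulVec, Matrix.add_mulVec, dotProduct_add,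
      dotProduct_add]
  have huy : u ⬝ᵥ y = y ⬝ᵥ u := dotProduct_comm _ _
  constructor
  · rw [hrw1, hrw2, hPx, hHterm, hR1, ← hWterm]
    have := hcross
    have := huy
    linarith
  · have := hWpsd.dotProduct_mulVec_nonneg (u + Wd.mulVec y)
    simpa using this
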